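/- A finite dataset D is naively Nash rationalizable if and only if it satisfies N-SARP. -/

import Mathlib

def maxSet {X : Type} (S : Set X) (pref : X → X → Prop) : Set X :=
  {x | x ∈ S ∧ ∀ y ∈ S, pref x y}

def WeakOrder {X : Type} (pref : X → X → Prop) : Prop :=
  (∀ a b, pref a b ∨ pref b a) ∧ Transitive pref

def sec1 {X₁ X₂ : Type} (B : Set (X₁ × X₂)) (a : X₁) : Set (X₁ × X₂) :=
  {y ∈ B | y.1 = a}

def sec2 {X₁ X₂ : Type} (B : Set (X₁ × X₂)) (b : X₂) : Set (X₁ × X₂) :=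
  {y ∈ B | y.2 = b}

def NSARP {K X₁ X₂ : Type} (x : K → X₁ × X₂) (B : K → Set (X₁ × X₂)) : Prop :=
  ¬ ∃ (L : ℕ) (k : Fin (L + 1) → K), ∀ l : Fin (L + 1),
      x (k l) ≠ x (k (l + 1)) ∧ x (k l) ∈ sec1 (B (k (l + 1))) (x (k (l + 1))).1

def NNSARP {K X₁ X₂ : Type} (x : K → X₁ × X₂) (B : K → Set (X₁ × X₂)) : Prop :=
  ¬ ∃ (L : ℕ) (k : Fin (L + 1) → K), ∀ l : Fin (L + 1),
      x (k l) ≠ x (k (l + 1)) ∧ x (k l) ∈ sec2 (B (k (l + 1))) (x (k (l + 1))).2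

def Cond1 {K X₁ X₂ : Type} (x : K → X₁ × X₂) (B : K → Set (X₁ × X₂)) : Prop :=
  ∀ S : Set K, S.Nonempty →
    ¬ (⋃ k ∈ S, sec1 (B k) (x k).1) ⊆ ⋃ k ∈ S, (B k \ sec1 (B k) (x k).1)

def Cond2 {K X₁ X₂ : Type} (x : K → X₁ × X₂) (B : K → Set (X₁ × X₂)) : Prop :=
  ¬ ∃ (L : ℕ) (k : Fin (L + 1) → K), ∀ l : Fin (L + 1),
      x (k l) ≠ x (k (l + 1)) ∧ x (k l) ∈ sec1 (B (k (l + 1))) (x (k l)).1 ∧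
      sec1 (B (k (l + 1))) (x (k l)).1 ⊆ sec1 (B (k l)) (x (k l)).1

def NaiveRat {K X₁ X₂ : Type} (x : K → X₁ × X₂) (B : K → Set (X₁ × X₂)) : Prop :=
  ∃ p1 p2 : X₁ × X₂ → X₁ × X₂ → Prop, WeakOrder p1 ∧ WeakOrder p2 ∧
    ∀ k, (∃ z, maxSet (B k) p1 = {z} ∧ z ∈ sec1 (B k) (x k).1) ∧
      maxSet (sec1 (B k) (x k).1) p2 = {x k}

def NaiveNashRat {K X₁ X₂ : Type} (x : K → X₁ × X₂) (B : K → Set (X₁ × X₂)) : Prop :=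
  ∃ p1 p2 : X₁ × X₂ → X₁ × X₂ → Prop, WeakOrder p1 ∧ WeakOrder p2 ∧
    ∀ k, x k ∈ maxSet (sec2 (B k) (x k).2) p1 ∧
      maxSet (sec1 (B k) (x k).1) p2 = {x k}

def StrictNaiveNashRat {K X₁ X₂ : Type} (x : K → X₁ × X₂) (B : K → Set (X₁ × X₂)) : Prop :=
  ∃ p1 p2 : X₁ × X₂ → X₁ × X₂ → Prop, WeakOrder p1 ∧ WeakOrder p2 ∧
    ∀ k, maxSet (sec2 (B k) (x k).2) p1 = {x k} ∧
      maxSet (sec1 (B k) (x k).1) p2 = {x k}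

def SophRat {K X₁ X₂ : Type} (x : K → X₁ × X₂) (B : K → Set (X₁ × X₂)) : Prop :=
  ∃ p1 p2 : X₁ × X₂ → X₁ × X₂ → Prop, WeakOrder p1 ∧ WeakOrder p2 ∧
    ∀ k, maxSet (⋃ a ∈ Prod.fst '' B k, maxSet (sec1 (B k) a) p2) p1 = {x k}

section Aux

variable {K X₁ X₂ : Type} (x : K → X₁ × X₂) (B : K → Set (X₁ × X₂))

/-- revealed strict preference: `a` is a chosen point whose budget section contains `b ≠ a`. -/
def Rrel (a b : X₁ × X₂) : Prop :=
  b ≠ a ∧ ∃ k, a = x k ∧ b ∈ sec1 (B k) (x k).1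

lemma chain_of_transGen {a b : X₁ × X₂} (h : Relation.TransGen (Rrel x B) a b) :
    ∃ (n : ℕ) (f : ℕ → X₁ × X₂) (g : ℕ → K), f 0 = a ∧ f (n + 1) = b ∧
      ∀ i ≤ n, f i = x (g i) ∧ f (i + 1) ≠ f i ∧
        f (i + 1) ∈ sec1 (B (g i)) (x (g i)).1 := by
  induction h with
  | single hr =>
    rename_i b
    obtain ⟨hne, k, hk, hb⟩ := hr
    refine ⟨0, fun i => if i = 0 then a else b, fun _ => k, by simp, by simp, ?_⟩
    intro i hi
    interval_cases i
    simpa using ⟨hk, hne, hb⟩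
  | tail hab hbc ih =>
    rename_i b c
    obtain ⟨n, f, g, hf0, hfn, hchain⟩ := ih
    obtain ⟨hne, k', hk', hc⟩ := hbc
    refine ⟨n + 1, fun i => if i = n + 2 then c else f i,
      fun i => if i = n + 1 then k' else g i, ?_, by simp, ?_⟩
    · simpa using hf0
    · intro i hi
      rcases Nat.lt_or_ge i (n + 1) with h1 | h1
      · have hi1 : i ≠ n + 2 := by omega
        have hi2 : i + 1 ≠ n + 2 := by omega
        have hi3 : i ≠ n + 1 := by omega
        simp only [if_neg hi1, if_neg hi2, if_neg hi3]
        exact hchain i (by omega)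
      · have hieq : i = n + 1 := le_antisymm hi h1
        subst hieq
        have h4 : n + 1 ≠ n + 2 := by omega
        refine ⟨?_, ?_, ?_⟩
        · simp [h4, hfn, hk']
        · simp only [h4]
          simp [hfn]
          exact hne
        · simpa [h4, hk'] using hc

lemma noRefl_of_NSARP (hN : NSARP x B) (k0 : K) :
    ¬ Relation.TransGen (Rrel x B) (x k0) (x k0) := by
  intro hT
  obtain ⟨n, f, g, hf0, hfn, hchain⟩ := chain_of_transGen x B hT
  refine hN ⟨n, fun l => g (n - l.val), fun l => ?_⟩
  simp only
  rcases eq_or_lt_of_le (Nat.lt_succ_iff.mp l.isLt) with hl | hl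
  · -- l.val = n, so l = last, l + 1 = 0
    have hlast : l = Fin.last n := Fin.ext hl
    have hadd : (l + 1 : Fin (n + 1)) = 0 := by rw [hlast]; simp
    rw [hadd, hlast]
    simp only [Fin.val_last, Fin.val_zero, Nat.sub_self, Nat.sub_zero]
    obtain ⟨h1, h2, h3⟩ := hchain n le_rfl
    obtain ⟨h1', _, _⟩ := hchain 0 (Nat.zero_le n)
    have hx0 : x (g 0) = f (n + 1) := by rw [← h1', hf0, hfn]
    constructor
    · rw [hx0, ← h1]; exact h2
    · rw [hx0]; exact h3
  · -- l.val < n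
    have hlt : l < Fin.last n := by rw [Fin.lt_iff_val_lt_val]; simpa using hl
    have hadd : (l + 1 : Fin (n + 1)).val = l.val + 1 := Fin.val_add_one_of_lt hlt
    rw [hadd]
    set i := n - (l.val + 1) with hi
    have hi1 : i + 1 = n - l.val := by omega
    obtain ⟨h1, h2, h3⟩ := hchain i (by omega)
    obtain ⟨h1', _, _⟩ := hchain (n - l.val) (by omega)
    rw [hi1] at h2 h3
    constructor
    · rw [← h1', ← h1]; exact h2
    · rw [← h1']; exact h3

noncomputable def uFn [Fintype K] (a : X₁ × X₂) : ℕ :=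
  2 * Fintype.card K * {k | Relation.TransGen (Rrel x B) a (x k)}.ncard +
    {k | x k = a}.ncard

lemma uFn_lt [Fintype K] (hN : NSARP x B) {a b : X₁ × X₂} (hR : Rrel x B a b) :
    uFn x B b < uFn x B a := by
  obtain ⟨hne, k0, hk0, hbmem⟩ := hR
  have hC : 1 ≤ Fintype.card K := Fintype.card_pos_iff.mpr ⟨k0⟩
  by_cases hb : ∃ k1, x k1 = b
  · obtain ⟨k1, hk1⟩ := hb
    have hsub : {k | Relation.TransGen (Rrel x B) b (x k)} ⊆
        {k | Relation.TransGen (Rrel x B) a (x k)} := by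
      intro z hz
      exact Relation.TransGen.head ⟨hne, k0, hk0, hbmem⟩ hz
    have hssub : {k | Relation.TransGen (Rrel x B) b (x k)} ⊂
        {k | Relation.TransGen (Rrel x B) a (x k)} := by
      refine ⟨hsub, fun hsub' => ?_⟩
      have hk1a : k1 ∈ {k | Relation.TransGen (Rrel x B) a (x k)} := by
        rw [Set.mem_setOf_eq, hk1]
        exact Relation.TransGen.single ⟨hne, k0, hk0, hbmem⟩
      have := hsub' hk1a
      rw [Set.mem_setOf_eq, hk1] at this
      rw [← hk1] at this
      exact noRefl_of_NSARP x B hN k1 this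
    have hcard : {k | Relation.TransGen (Rrel x B) b (x k)}.ncard <
        {k | Relation.TransGen (Rrel x B) a (x k)}.ncard :=
      Set.ncard_lt_ncard hssub (Set.toFinite _)
    have hdb : {k | x k = b}.ncard ≤ Fintype.card K := by
      have := Set.ncard_le_ncard (Set.subset_univ {k | x k = b}) (Set.toFinite _)
      rwa [Set.ncard_univ, Nat.card_eq_fintype_card] at this
    unfold uFn
    nlinarith [hcard, hdb, hC]
  · have h1 : {k | x k = b} = ∅ := by
      ext z; simp only [Set.mem_setOf_eq, Set.mem_empty_iff_false, iff_false]
      intro hz; exact hb ⟨z, hz⟩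
    have h2 : {k | Relation.TransGen (Rrel x B) b (x k)} = ∅ := by
      ext z; simp only [Set.mem_setOf_eq, Set.mem_empty_iff_false, iff_false]
      intro hz
      obtain ⟨c, hc, -⟩ := Relation.TransGen.head'_iff.mp hz
      obtain ⟨-, k2, hk2, -⟩ := hc
      exact hb ⟨k2, hk2.symm⟩
    have h3 : 1 ≤ {k | x k = a}.ncard := by
      rw [Nat.one_le_iff_ne_zero, ← Nat.pos_iff_ne_zero]
      rw [Set.ncard_pos (Set.toFinite _)]
      exact ⟨k0, hk0.symm⟩
    unfold uFn
    rw [h1, h2, Set.ncard_empty]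
    omega

end Aux

open Fin.NatCast

theorem naive_nash_rationalizable_iff_NSARP
    {K X₁ X₂ : Type} [Fintype K]
    (x : K → X₁ × X₂) (B : K → Set (X₁ × X₂)) (hmem : ∀ k, x k ∈ B k) :
    NaiveNashRat x B ↔ NSARP x B := by
  constructor
  · rintro ⟨p1, p2, hw1, hw2, hmax⟩ ⟨L, k, hc⟩
    -- strict preference derived from p2
    set s : X₁ × X₂ → X₁ × X₂ → Prop := fun a b => p2 a b ∧ ¬ p2 b a with hs_def
    have hstrans : ∀ a b c, s a b → s b c → s a c := by
      rintro a b c ⟨h1, h2⟩ ⟨h3, h4⟩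
      refine ⟨hw2.2 h1 h3, fun h5 => h4 (hw2.2 h5 h1)⟩
    have hs : ∀ l : Fin (L + 1), s (x (k (l + 1))) (x (k l)) := by
      intro l
      obtain ⟨hne, hmem'⟩ := hc l
      have hmx := (hmax (k (l + 1))).2
      have hx1 : x (k (l + 1)) ∈ maxSet (sec1 (B (k (l + 1))) (x (k (l + 1))).1) p2 := by
        rw [hmx]; rfl
      refine ⟨hx1.2 _ hmem', fun hcon => ?_⟩
      have : x (k l) ∈ maxSet (sec1 (B (k (l + 1))) (x (k (l + 1))).1) p2 := by
        refine ⟨hmem', fun z hz => hw2.2 hcon (hx1.2 z hz)⟩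
      rw [hmx] at this
      exact hne this
    have key : ∀ j : ℕ, s (x (k ((j + 1 : ℕ) : Fin (L + 1)))) (x (k 0)) := by
      intro j
      induction j with
      | zero =>
        have h0 : ((0 + 1 : ℕ) : Fin (L + 1)) = (0 : Fin (L + 1)) + 1 := by
          simp
        rw [h0]
        exact hs 0
      | succ j ih =>
        have h0 : ((j + 1 + 1 : ℕ) : Fin (L + 1)) = ((j + 1 : ℕ) : Fin (L + 1)) + 1 := by
          push_cast; ring
        rw [h0]
        exact hstrans _ _ _ (hs ((j + 1 : ℕ) : Fin (L + 1))) ih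
    have hfin := key L
    rw [show ((L + 1 : ℕ) : Fin (L + 1)) = 0 from Fin.natCast_self (L + 1)] at hfin
    exact hfin.2 hfin.1
  · intro hN
    refine ⟨fun _ _ => True, fun a b => uFn x B b ≤ uFn x B a,
      ⟨fun _ _ => Or.inl trivial, fun _ _ _ _ _ => trivial⟩,
      ⟨fun a b => le_total (uFn x B b) (uFn x B a), fun a b c hab hbc => le_trans hbc hab⟩,
      fun k => ⟨⟨⟨hmem k, rfl⟩, fun _ _ => trivial⟩, ?_⟩⟩
    ext y
    simp only [Set.mem_singleton_iff]
    constructor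
    · rintro ⟨hy, hymax⟩
      by_contra hne
      have hR : Rrel x B (x k) y := ⟨hne, k, rfl, hy⟩
      have hlt := uFn_lt x B hN hR
      have hle := hymax (x k) ⟨hmem k, rfl⟩
      omega
    · rintro rfl
      refine ⟨⟨hmem k, rfl⟩, fun z hz => ?_⟩
      by_cases hz' : z = x k
      · rw [hz']
      · exact (uFn_lt x B hN ⟨hz', k, rfl, hz⟩).le
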